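/- The quaternion form of SLERP agrees with the vector form: with a = (p_a × p_b)/sin θ, one has ι(p_a)⁻¹ · ι(p_b) = cos θ − sin θ · ι(a) = exp(−θ ι(a)) in the quaternions, and for every t ∈ ℝ, ι(p_a) · exp(−tθ ι(a)) = ι(γ(t)); that is, the quaternion expression q_a (q_a⁻¹ q_b)^t (with the real power interpreted through the quaternion exponential) is the pure quaternion whose vector part is the SLERP point γ(t). -/

import Mathlib

open scoped Quaternion

/-- Euclidean dot product on `ℝ³`. -/
def dot3 (u v : Fin 3 → ℝ) : ℝ := u 0 * v 0 + u 1 * v 1 + u 2 * v 2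

/-- Euclidean norm on `ℝ³`. -/
noncomputable def norm3 (u : Fin 3 → ℝ) : ℝ := Real.sqrt (dot3 u u)

/-- Cross product on `ℝ³`. -/
def cross3 (u v : Fin 3 → ℝ) : Fin 3 → ℝ :=
  ![u 1 * v 2 - u 2 * v 1, u 2 * v 0 - u 0 * v 2, u 0 * v 1 - u 1 * v 0]

/-- The pure quaternion `ι(u) = u₁ i + u₂ j + u₃ k` associated with `u ∈ ℝ³`. -/
def iota (u : Fin 3 → ℝ) : ℍ[ℝ] := ⟨0, u 0, u 1, u 2⟩

lemma iota_re (u : Fin 3 → ℝ) : (iota u).re = 0 := rfl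
lemma iota_imI (u : Fin 3 → ℝ) : (iota u).imI = u 0 := rfl
lemma iota_imJ (u : Fin 3 → ℝ) : (iota u).imJ = u 1 := rfl
lemma iota_imK (u : Fin 3 → ℝ) : (iota u).imK = u 2 := rfl

lemma cross3_0 (u v : Fin 3 → ℝ) : cross3 u v 0 = u 1 * v 2 - u 2 * v 1 := rfl
lemma cross3_1 (u v : Fin 3 → ℝ) : cross3 u v 1 = u 2 * v 0 - u 0 * v 2 := rfl
lemma cross3_2 (u v : Fin 3 → ℝ) : cross3 u v 2 = u 0 * v 1 - u 1 * v 0 := rfl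

lemma iota_smul (r : ℝ) (u : Fin 3 → ℝ) : iota (r • u) = r • iota u := by
  ext <;> simp [iota_re, iota_imI, iota_imJ, iota_imK]

lemma iota_add (u v : Fin 3 → ℝ) : iota (u + v) = iota u + iota v := by
  ext <;> simp [iota_re, iota_imI, iota_imJ, iota_imK]

lemma iota_sub (u v : Fin 3 → ℝ) : iota (u - v) = iota u - iota v := by
  ext <;> simp [iota_re, iota_imI, iota_imJ, iota_imK]

lemma normSq_iota (u : Fin 3 → ℝ) : Quaternion.normSq (iota u) = dot3 u u := by
  simp [Quaternion.normSq_def', iota_re, iota_imI, iota_imJ, iota_imK, dot3]; ring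

lemma norm_iota_of_unit (u : Fin 3 → ℝ) (h : dot3 u u = 1) : ‖iota u‖ = 1 := by
  have h1 : ‖iota u‖ * ‖iota u‖ = 1 := by
    rw [← Quaternion.normSq_eq_norm_mul_self, normSq_iota, h]
  rcases mul_self_eq_one_iff.mp h1 with h2 | h2
  · exact h2
  · nlinarith [norm_nonneg (iota u)]

lemma exp_smul_pure (u : Fin 3 → ℝ) (h : dot3 u u = 1) (r : ℝ) :
    NormedSpace.exp (r • iota u) = (Real.cos r : ℍ[ℝ]) + Real.sin r • iota u := by
  have hre : (r • iota u).re = 0 := by simp [Quaternion.re_smul, iota_re]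
  rw [Quaternion.exp_of_re_eq_zero _ hre]
  have hnorm : ‖r • iota u‖ = |r| := by
    rw [norm_smul, norm_iota_of_unit u h, Real.norm_eq_abs, mul_one]
  rw [hnorm]
  rcases eq_or_ne r 0 with rfl | hr
  · simp
  · rw [Real.cos_abs]
    congr 1
    rw [smul_smul]
    congr 1
    rcases abs_cases r with ⟨h1, _⟩ | ⟨h1, _⟩
    · rw [h1]; field_simp
    · rw [h1, Real.sin_neg]; field_simp

/-- The quaternion form of SLERP agrees with the vector form. With
`a = (p_a × p_b)/sin θ`, one has
`ι(p_a)⁻¹ ι(p_b) = cos θ − sin θ ι(a) = exp(−θ ι(a))`, and for every `t`,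
`ι(p_a) · exp(−tθ ι(a)) = ι(γ(t))`; i.e. `q_a (q_a⁻¹ q_b)^t` (real power taken via
the quaternion exponential) is the pure quaternion whose vector part is `γ(t)`. -/
theorem quaternion_slerp_agrees_with_vector_slerp
    (pa pb : Fin 3 → ℝ) (hpa : norm3 pa = 1) (hpb : norm3 pb = 1)
    (θ : ℝ) (hθ : θ ∈ Set.Ioo 0 Real.pi) (hdot : dot3 pa pb = Real.cos θ)
    (n : Fin 3 → ℝ) (hn : n = (Real.sin θ)⁻¹ • (pb - Real.cos θ • pa))
    (γ : ℝ → Fin 3 → ℝ)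
    (hγ : ∀ t : ℝ, γ t = Real.cos (t * θ) • pa + Real.sin (t * θ) • n)
    (a : Fin 3 → ℝ) (ha : a = (Real.sin θ)⁻¹ • cross3 pa pb) :
    (iota pa)⁻¹ * iota pb = (Real.cos θ : ℍ[ℝ]) - Real.sin θ • iota a ∧
    (iota pa)⁻¹ * iota pb = NormedSpace.exp (-(θ • iota a)) ∧
    (∀ t : ℝ, iota pa * NormedSpace.exp (-((t * θ) • iota a)) = iota (γ t)) := by
  have hs : 0 < Real.sin θ := Real.sin_pos_of_pos_of_lt_pi hθ.1 hθ.2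
  have hs' : Real.sin θ ≠ 0 := hs.ne'
  have hpa2 : pa 0 * pa 0 + pa 1 * pa 1 + pa 2 * pa 2 = 1 := by
    have h0 : 0 ≤ dot3 pa pa := by
      unfold dot3
      nlinarith [mul_self_nonneg (pa 0), mul_self_nonneg (pa 1), mul_self_nonneg (pa 2)]
    have h1 := hpa
    unfold norm3 at h1
    have h2 : dot3 pa pa = 1 := by nlinarith [Real.sq_sqrt h0, h1]
    simpa [dot3] using h2
  have hpb2 : pb 0 * pb 0 + pb 1 * pb 1 + pb 2 * pb 2 = 1 := by
    have h0 : 0 ≤ dot3 pb pb := by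
      unfold dot3
      nlinarith [mul_self_nonneg (pb 0), mul_self_nonneg (pb 1), mul_self_nonneg (pb 2)]
    have h1 := hpb
    unfold norm3 at h1
    have h2 : dot3 pb pb = 1 := by nlinarith [Real.sq_sqrt h0, h1]
    simpa [dot3] using h2
  have hdot' : pa 0 * pb 0 + pa 1 * pb 1 + pa 2 * pb 2 = Real.cos θ := hdot
  have hpyth : Real.sin θ ^ 2 + Real.cos θ ^ 2 = 1 := Real.sin_sq_add_cos_sq θ
  have haa : dot3 a a = 1 := by
    subst ha
    have h3 : dot3 ((Real.sin θ)⁻¹ • cross3 pa pb) ((Real.sin θ)⁻¹ • cross3 pa pb)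
        = (Real.sin θ)⁻¹ ^ 2 * ((pa 0 * pa 0 + pa 1 * pa 1 + pa 2 * pa 2) *
            (pb 0 * pb 0 + pb 1 * pb 1 + pb 2 * pb 2)
          - (pa 0 * pb 0 + pa 1 * pb 1 + pa 2 * pb 2) ^ 2) := by
      simp only [dot3, Pi.smul_apply, smul_eq_mul, cross3_0, cross3_1, cross3_2]
      ring
    rw [h3, hpa2, hpb2, hdot']
    field_simp
    nlinarith [hpyth]
  have hsmul : Real.sin θ • iota a = iota (cross3 pa pb) := by
    rw [ha, iota_smul, smul_smul, mul_inv_cancel₀ hs', one_smul]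
  have hinv : (iota pa)⁻¹ = -iota pa := by
    apply inv_eq_of_mul_eq_one_right
    ext
    · simp only [Quaternion.re_mul, Quaternion.re_neg, Quaternion.imI_neg, Quaternion.imJ_neg,
        Quaternion.imK_neg, iota_re, iota_imI, iota_imJ, iota_imK, Quaternion.re_one]
      ring_nf
      linarith [hpa2]
    · simp only [Quaternion.imI_mul, Quaternion.re_neg, Quaternion.imI_neg, Quaternion.imJ_neg,
        Quaternion.imK_neg, iota_re, iota_imI, iota_imJ, iota_imK, Quaternion.imI_one]
      ring
    · simp only [Quaternion.imJ_mul, Quaternion.re_neg, Quaternion.imI_neg, Quaternion.imJ_neg,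
        Quaternion.imK_neg, iota_re, iota_imI, iota_imJ, iota_imK, Quaternion.imJ_one]
      ring
    · simp only [Quaternion.imK_mul, Quaternion.re_neg, Quaternion.imI_neg, Quaternion.imJ_neg,
        Quaternion.imK_neg, iota_re, iota_imI, iota_imJ, iota_imK, Quaternion.imK_one]
      ring
  have key1 : (iota pa)⁻¹ * iota pb = (Real.cos θ : ℍ[ℝ]) - Real.sin θ • iota a := by
    rw [hinv, hsmul]
    ext
    · simp only [Quaternion.re_mul, Quaternion.re_neg, Quaternion.imI_neg, Quaternion.imJ_neg,
        Quaternion.imK_neg, iota_re, iota_imI, iota_imJ, iota_imK, Quaternion.re_sub,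
        Quaternion.re_coe]
      linarith [hdot']
    · simp only [Quaternion.imI_mul, Quaternion.re_neg, Quaternion.imI_neg, Quaternion.imJ_neg,
        Quaternion.imK_neg, iota_re, iota_imI, iota_imJ, iota_imK, Quaternion.imI_sub,
        Quaternion.imI_coe, cross3_0]
      ring
    · simp only [Quaternion.imJ_mul, Quaternion.re_neg, Quaternion.imI_neg, Quaternion.imJ_neg,
        Quaternion.imK_neg, iota_re, iota_imI, iota_imJ, iota_imK, Quaternion.imJ_sub,
        Quaternion.imJ_coe, cross3_1]
      ring
    · simp only [Quaternion.imK_mul, Quaternion.re_neg, Quaternion.imI_neg, Quaternion.imJ_neg,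
        Quaternion.imK_neg, iota_re, iota_imI, iota_imJ, iota_imK, Quaternion.imK_sub,
        Quaternion.imK_coe, cross3_2]
      ring
  refine ⟨key1, ?_, ?_⟩
  · rw [show -(θ • iota a) = (-θ) • iota a from (neg_smul θ (iota a)).symm,
      exp_smul_pure a haa, key1, Real.cos_neg, Real.sin_neg, neg_smul, sub_eq_add_neg]
  · intro t
    rw [show -((t * θ) • iota a) = (-(t * θ)) • iota a from (neg_smul _ (iota a)).symm,
      exp_smul_pure a haa, Real.cos_neg, Real.sin_neg, neg_smul, hγ, hn]
    have hmulcross : iota pa * iota (cross3 pa pb) = Real.cos θ • iota pa - iota pb := by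
      ext
      · simp only [Quaternion.re_mul, iota_re, iota_imI, iota_imJ, iota_imK, Quaternion.re_sub,
          Quaternion.re_smul, smul_eq_mul, cross3_0, cross3_1, cross3_2]
        ring
      · simp only [Quaternion.imI_mul, iota_re, iota_imI, iota_imJ, iota_imK, Quaternion.imI_sub,
          Quaternion.imI_smul, smul_eq_mul, cross3_0, cross3_1, cross3_2]
        linear_combination pa 0 * hdot' - pb 0 * hpa2
      · simp only [Quaternion.imJ_mul, iota_re, iota_imI, iota_imJ, iota_imK, Quaternion.imJ_sub,
          Quaternion.imJ_smul, smul_eq_mul, cross3_0, cross3_1, cross3_2]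
        linear_combination pa 1 * hdot' - pb 1 * hpa2
      · simp only [Quaternion.imK_mul, iota_re, iota_imI, iota_imJ, iota_imK, Quaternion.imK_sub,
          Quaternion.imK_smul, smul_eq_mul, cross3_0, cross3_1, cross3_2]
        linear_combination pa 2 * hdot' - pb 2 * hpa2
    have hia : iota pa * iota a
        = (Real.sin θ)⁻¹ • (Real.cos θ • iota pa - iota pb) := by
      rw [ha, iota_smul, mul_smul_comm, hmulcross]
    rw [mul_add, mul_neg, mul_smul_comm, hia]
    simp only [iota_add, iota_smul, iota_sub, Quaternion.mul_coe_eq_smul]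
    module
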